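/- Let A, B : ℝ → ℝ with 0 ≤ B(τ) < 1 for all τ, define F(τ) = A(τ)/(1 - B(τ)) and M(γ) = sup_τ (A(τ) + B(τ)·γ). Suppose τ* maximizes F and let γ* = F(τ*). Then: (1) for all γ ∈ [0, γ*], M(γ) ≥ γ; (2) for all γ > γ*, M(γ) < γ; and (3) M(γ*) = γ*. -/

import Mathlib

theorem stmt_17 (A B F M : ℝ → ℝ)
    (hB : ∀ τ, 0 ≤ B τ ∧ B τ < 1)
    (hF : ∀ τ, F τ = A τ / (1 - B τ))
    (τstar : ℝ) (hτstar : ∀ τ, F τ ≤ F τstar)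
    (hM : ∀ γ, (∀ τ, A τ + B τ * γ ≤ M γ) ∧ ∃ τ, M γ = A τ + B τ * γ)
    (γstar : ℝ) (hγstar : γstar = F τstar) :
    (∀ γ ∈ Set.Icc 0 γstar, γ ≤ M γ) ∧
    (∀ γ, γstar < γ → M γ < γ) ∧
    M γstar = γstar := by
  have hA : ∀ τ, A τ = F τ * (1 - B τ) := by
    intro τ
    have h1 : 1 - B τ ≠ 0 := by have := (hB τ).2; linarith
    rw [hF τ, div_mul_cancel₀ _ h1]
  have key : ∀ γ τ, A τ + B τ * γ = F τ * (1 - B τ) + B τ * γ := by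
    intro γ τ; rw [hA τ]
  refine ⟨?_, ?_, ?_⟩
  · intro γ hγ
    have h := (hM γ).1 τstar
    have hb := hB τstar
    nlinarith [hγ.2, key γ τstar, h, hγstar]
  · intro γ hγ
    obtain ⟨τ, hτ⟩ := (hM γ).2
    have hb := hB τ
    have hle : F τ ≤ γstar := hγstar ▸ hτstar τ
    nlinarith [key γ τ]
  · obtain ⟨τ, hτ⟩ := (hM γstar).2
    have h := (hM γstar).1 τstar
    have hb := hB τ
    have hb2 := hB τstar
    have hle : F τ ≤ γstar := hγstar ▸ hτstar τ
    have h1 : γstar ≤ M γstar := by nlinarith [key γstar τstar]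
    have h2 : M γstar ≤ γstar := by nlinarith [key γstar τ]
    linarith
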